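/- Let E be a cofinal directed graph and let v be a vertex such that no cycle of E passes through any vertex of H(v) := {w ∈ E⁰ : v ≥ w}. Then E has no cycles at all. -/

import Mathlib

/-- `IsPathFrom src rng l v w` means the finite list of edges `l` is a path
from vertex `v` to vertex `w` in the directed graph with source map `src` and
range map `rng`.  The empty list is the trivial path at a vertex (so `v = w`). -/
def IsPathFrom {V E : Type*} (src rng : E → V) (l : List E) (v w : V) : Prop :=
  l.Chain' (fun e f => rng e = src f) ∧
  (∀ e ∈ l.head?, src e = v) ∧
  (∀ e ∈ l.getLast?, rng e = w) ∧
  (l = [] → v = w)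

/-- `v ≥ w`: there is a path from `v` to `w`. -/
def Reaches {V E : Type*} (src rng : E → V) (v w : V) : Prop :=
  ∃ l : List E, IsPathFrom src rng l v w

/-- An infinite path `e₁e₂…` is a sequence of edges with `r(eᵢ) = s(eᵢ₊₁)`. -/
def IsInfPath {V E : Type*} (src rng : E → V) (e : ℕ → E) : Prop :=
  ∀ i, rng (e i) = src (e (i + 1))

/-- A graph is cofinal if every vertex can reach some vertex on every infinite path. -/
def Cofinal {V E : Type*} (src rng : E → V) : Prop :=
  ∀ (v : V) (e : ℕ → E), IsInfPath src rng e → ∃ i, Reaches src rng v (src (e i))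

/-- A sink is a vertex emitting no edges. -/
def IsSink {V E : Type*} (src : E → V) (v : V) : Prop := ∀ e, src e ≠ v

/-- A singular vertex is a sink or an infinite emitter. -/
def IsSingular {V E : Type*} (src : E → V) (v : V) : Prop :=
  IsSink src v ∨ {e | src e = v}.Infinite

/-- The graph has no cycles: no nonempty path begins and ends at the same vertex. -/
def HasNoCycles {V E : Type*} (src rng : E → V) : Prop :=
  ∀ (v : V) (l : List E), l ≠ [] → ¬ IsPathFrom src rng l v v

/-- If `E` is cofinal and no cycle of `E` passes through any vertex
of `H(v) = {w : v ≥ w}`, then `E` has no cycles at all. -/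
theorem no_cycles_of_no_cycles_in_hereditary {V E : Type*} (src rng : E → V)
    (hcof : Cofinal src rng) (v : V)
    (hH : ∀ (u : V) (l : List E), l ≠ [] → IsPathFrom src rng l u u →
      ∀ e ∈ l, ¬ Reaches src rng v (src e)) :
    HasNoCycles src rng := by
  intro u l hne hpath
  obtain ⟨hchain, hhead, hlast, -⟩ := hpath
  have hn : 0 < l.length := List.length_pos_iff.mpr hne
  set e : ℕ → E := fun i => l.get ⟨i % l.length, Nat.mod_lt _ hn⟩ with he
  have hinf : IsInfPath src rng e := by
    intro i
    rcases Nat.lt_or_ge (i % l.length + 1) l.length with h | h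
    · have h1 : (i + 1) % l.length = i % l.length + 1 := by
        rw [Nat.add_mod, Nat.one_mod_eq_one.mpr (by omega), Nat.mod_eq_of_lt h]
      have := List.isChain_iff_getElem.mp hchain (i % l.length) (by omega)
      simp only [he, h1]
      exact this
    · have hlt : i % l.length < l.length := Nat.mod_lt _ hn
      have heq : i % l.length = l.length - 1 := by omega
      have h1 : (i + 1) % l.length = 0 := by
        rw [Nat.add_mod, heq]
        simp [Nat.sub_add_cancel hn]
      simp only [he, h1, heq]
      have hlastv : rng (l.get ⟨l.length - 1, by omega⟩) = u := by
        apply hlast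
        rw [List.getLast?_eq_getLast hne, Option.mem_some_iff]
        rw [List.getLast_eq_getElem]
        simp
      have hheadv : src (l.get ⟨0, hn⟩) = u := by
        apply hhead
        rw [List.head?_eq_head hne, Option.mem_some_iff]
        rw [← List.get_mk_zero hn]
      rw [hlastv, hheadv]
  obtain ⟨i, hreach⟩ := hcof v e hinf
  exact hH u l hne ⟨hchain, hhead, hlast, fun h => absurd h hne⟩ (e i) (List.get_mem _ _) hreach
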